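/- Let h₁,…,h_k : X → ℝ∞ be proper closed convex on a finite-dimensional Hilbert space, x₀ ∈ X, F(z) := −Σᵢ hᵢ*(zᵢ) − ½‖Σᵢ zᵢ‖² + ⟨x₀, Σᵢ zᵢ⟩, and suppose x* minimizes x ↦ Σᵢ hᵢ(x) + ½‖x − x₀‖² with value α. If a sequence zⁿ ∈ X^k satisfies F(zⁿ) → α and Σᵢ zᵢⁿ → v*, then x₀ − v* = x*, i.e. convergence of the dual objective value to the primal optimal value forces x₀ − lim Σᵢ zᵢⁿ to be the primal minimizer. -/
import Mathlib


open RealInnerProductSpace Filter Topology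

/-- Fenchel conjugate of an extended-real-valued function on a real inner product space. -/
noncomputable def fenchelConj {X : Type*} [NormedAddCommGroup X] [InnerProductSpace ℝ X]
    (f : X → EReal) (z : X) : EReal :=
  ⨆ x : X, ((⟪z, x⟫ : ℝ) : EReal) - f x

/-- A proper function: not identically `⊤` and never `⊥`. -/
def ProperFn {X : Type*} (f : X → EReal) : Prop :=
  (∃ x, f x ≠ ⊤) ∧ ∀ x, f x ≠ ⊥

/-- Convexity for extended-real-valued functions. -/
def ConvexFnE {X : Type*} [AddCommGroup X] [Module ℝ X] (f : X → EReal) : Prop :=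
  ∀ x y : X, ∀ t : ℝ, 0 < t → t < 1 →
    f (t • x + (1 - t) • y) ≤ (t : EReal) * f x + ((1 - t : ℝ) : EReal) * f y

/-- `z` is a subgradient of `f` at `x`. -/
def IsSubgrad {X : Type*} [NormedAddCommGroup X] [InnerProductSpace ℝ X]
    (f : X → EReal) (x z : X) : Prop :=
  ∀ y : X, f x + ((⟪z, y - x⟫ : ℝ) : EReal) ≤ f y

private lemma ereal_sum_ne_bot {ι : Type*} (s : Finset ι) (f : ι → EReal)
    (hf : ∀ i ∈ s, f i ≠ ⊥) : ∑ i ∈ s, f i ≠ ⊥ := by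
  induction s using Finset.cons_induction with
  | empty => simp
  | cons a s ha ih =>
    rw [Finset.sum_cons, Ne, EReal.add_eq_bot_iff]
    push_neg
    exact ⟨hf a (Finset.mem_cons_self a s), ih fun i hi => hf i (Finset.mem_cons_of_mem hi)⟩

private lemma ereal_coe_sum {ι : Type*} (s : Finset ι) (f : ι → ℝ) :
    ((∑ i ∈ s, f i : ℝ) : EReal) = ∑ i ∈ s, ((f i : ℝ) : EReal) := by
  induction s using Finset.cons_induction with
  | empty => simp
  | cons a s ha ih => rw [Finset.sum_cons, Finset.sum_cons, EReal.coe_add, ih]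

theorem stmt7 {X : Type*} [NormedAddCommGroup X] [InnerProductSpace ℝ X] [FiniteDimensional ℝ X]
    (k : ℕ) (h : Fin k → X → EReal) (hp : ∀ i, ProperFn (h i))
    (hl : ∀ i, LowerSemicontinuous (h i)) (hc : ∀ i, ConvexFnE (h i))
    (x₀ xstar : X) (α : ℝ)
    (hval : (∑ i, h i xstar) + ((((1:ℝ)/2) * ‖xstar - x₀‖^2 : ℝ) : EReal) = (α : EReal))
    (hlb : ∀ x : X, (α : EReal) ≤ (∑ i, h i x) + ((((1:ℝ)/2) * ‖x - x₀‖^2 : ℝ) : EReal))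
    (z : ℕ → Fin k → X) (v : X)
    (hF : Tendsto (fun n =>
      -(∑ i, fenchelConj (h i) (z n i)) - ((((1:ℝ)/2) * ‖∑ i, z n i‖^2 : ℝ) : EReal)
        + ((⟪x₀, ∑ i, z n i⟫ : ℝ) : EReal)) atTop (𝓝 (α : EReal)))
    (hv : Tendsto (fun n => ∑ i, z n i) atTop (𝓝 v)) :
    x₀ - v = xstar := by
  -- each h i xstar is finite
  have hnb : ∀ i : Fin k, h i xstar ≠ ⊥ := fun i => (hp i).2 xstar
  have hnt : ∀ i : Fin k, h i xstar ≠ ⊤ := by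
    intro j hj
    apply (EReal.coe_ne_top α)
    rw [← hval]
    have hsum : (∑ i, h i xstar) = ⊤ := by
      rw [← Finset.sum_erase_add _ _ (Finset.mem_univ j), hj]
      exact EReal.add_top_of_ne_bot
        (ereal_sum_ne_bot _ _ fun i _ => hnb i)
    rw [hsum, EReal.top_add_of_ne_bot (EReal.coe_ne_bot _)]
  -- turn hval into a real equation
  set a : Fin k → ℝ := fun i => (h i xstar).toReal with ha
  have hcoe : ∀ i : Fin k, h i xstar = ((a i : ℝ) : EReal) := fun i =>
    (EReal.coe_toReal (hnt i) (hnb i)).symm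
  have hsum_coe : (∑ i, h i xstar) = (((∑ i, a i : ℝ)) : EReal) := by
    rw [ereal_coe_sum]
    exact Finset.sum_congr rfl fun i _ => hcoe i
  have hval' : (∑ i, a i) + (1/2) * ‖xstar - x₀‖^2 = α := by
    rw [hsum_coe, ← EReal.coe_add] at hval
    exact_mod_cast hval
  -- pointwise key inequality
  have key : ∀ n : ℕ,
      -(∑ i, fenchelConj (h i) (z n i)) - ((((1:ℝ)/2) * ‖∑ i, z n i‖^2 : ℝ) : EReal)
        + ((⟪x₀, ∑ i, z n i⟫ : ℝ) : EReal)
      ≤ (((α - (1/2) * ‖xstar - x₀ + ∑ i, z n i‖^2 : ℝ)) : EReal) := by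
    intro n
    set s : X := ∑ i, z n i with hs
    have hconj : ∀ i : Fin k,
        (((⟪z n i, xstar⟫ - a i : ℝ)) : EReal) ≤ fenchelConj (h i) (z n i) := by
      intro i
      have := le_iSup (fun x => ((⟪z n i, x⟫ : ℝ) : EReal) - h i x) xstar
      rwa [hcoe i, ← EReal.coe_sub] at this
    have hsumconj : (((∑ i, (⟪z n i, xstar⟫ - a i) : ℝ)) : EReal)
        ≤ ∑ i, fenchelConj (h i) (z n i) := by
      rw [ereal_coe_sum]
      exact Finset.sum_le_sum fun i _ => hconj i
    have hneg : -(∑ i, fenchelConj (h i) (z n i))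
        ≤ (((-∑ i, (⟪z n i, xstar⟫ - a i) : ℝ)) : EReal) := by
      rw [EReal.coe_neg]
      exact EReal.neg_le_neg_iff.mpr hsumconj
    calc -(∑ i, fenchelConj (h i) (z n i)) - ((((1:ℝ)/2) * ‖s‖^2 : ℝ) : EReal)
          + ((⟪x₀, s⟫ : ℝ) : EReal)
        ≤ (((-∑ i, (⟪z n i, xstar⟫ - a i) : ℝ)) : EReal)
            - ((((1:ℝ)/2) * ‖s‖^2 : ℝ) : EReal) + ((⟪x₀, s⟫ : ℝ) : EReal) := by
          exact add_le_add (EReal.sub_le_sub hneg le_rfl) le_rfl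
      _ = (((-∑ i, (⟪z n i, xstar⟫ - a i) - (1/2) * ‖s‖^2 + ⟪x₀, s⟫ : ℝ)) : EReal) := by
          rw [← EReal.coe_sub, ← EReal.coe_add]
      _ ≤ (((α - (1/2) * ‖xstar - x₀ + s‖^2 : ℝ)) : EReal) := by
          rw [EReal.coe_le_coe_iff]
          have hinner : ∑ i, ⟪z n i, xstar⟫ = ⟪s, xstar⟫ := by
            rw [hs, sum_inner]
          have hnorm : ‖xstar - x₀ + s‖^2
              = ‖xstar - x₀‖^2 + 2 * ⟪xstar - x₀, s⟫ + ‖s‖^2 :=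
            norm_add_sq_real _ _
          have h1 : ⟪xstar - x₀, s⟫ = ⟪xstar, s⟫ - ⟪x₀, s⟫ := inner_sub_left _ _ _
          have h2 : ⟪s, xstar⟫ = ⟪xstar, s⟫ := real_inner_comm _ _
          rw [Finset.sum_sub_distrib, hinner]
          nlinarith [hval']
  -- pass to the limit
  have hRHS : Tendsto (fun n => (((α - (1/2) * ‖xstar - x₀ + ∑ i, z n i‖^2 : ℝ)) : EReal))
      atTop (𝓝 (((α - (1/2) * ‖xstar - x₀ + v‖^2 : ℝ)) : EReal)) := by
    apply Tendsto.comp (continuous_coe_real_ereal.tendsto _)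
    apply Tendsto.const_sub
    apply Tendsto.const_mul
    have : Tendsto (fun n => xstar - x₀ + ∑ i, z n i) atTop (𝓝 (xstar - x₀ + v)) :=
      (tendsto_const_nhds.add hv)
    exact (this.norm).pow 2
  have hle : (α : EReal) ≤ (((α - (1/2) * ‖xstar - x₀ + v‖^2 : ℝ)) : EReal) :=
    le_of_tendsto_of_tendsto' hF hRHS key
  have hle' : α ≤ α - (1/2) * ‖xstar - x₀ + v‖^2 := by exact_mod_cast hle
  have hz : xstar - x₀ + v = 0 := by
    have : ‖xstar - x₀ + v‖^2 ≤ 0 := by linarith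
    have h0 : ‖xstar - x₀ + v‖ = 0 := by nlinarith [norm_nonneg (xstar - x₀ + v)]
    exact norm_eq_zero.mp h0
  have : v = x₀ - xstar := by
    have := hz
    abel_nf at this ⊢
    linear_combination (norm := abel_nf) this
  rw [this]
  abel
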